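/- Let n ≥ 4, let k ∈ {2, …, n−2}, and let b > 0 be a real number. Let x₁, …, x_{n−1}, y₁, …, y_{n−1} be nonnegative real numbers satisfying xᵢ + yᵢ = 2 for all i = 1, …, n−1, and ∏_{i∈I} xᵢ + ∏_{i∈I} yᵢ = 2b for every subset I ⊆ {1, …, n−1} with |I| = k. Then the set {x₁, …, x_{n−1}} has at most 2 elements, and the set {y₁, …, y_{n−1}} has at most 2 elements. -/

import Mathlib

private lemma alg_aux (xa xb xc P Q b : ℝ)
    (hP : 0 ≤ P) (hQ : 0 ≤ Q) (hb : 0 < b)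
    (hab : xa ≠ xb) (hac : xa ≠ xc) (hbc : xb ≠ xc)
    (h1 : xa*xb*P + (2-xa)*(2-xb)*Q = 2*b)
    (h2 : xa*xc*P + (2-xa)*(2-xc)*Q = 2*b)
    (h3 : xb*xc*P + (2-xb)*(2-xc)*Q = 2*b) : False := by
  have e2 : (xa - xc) * (xb*P - (2-xb)*Q) = 0 := by linear_combination h1 - h3
  have e3 : (xb - xc) * (xa*P - (2-xa)*Q) = 0 := by linear_combination h1 - h2
  have f2 : xb*P = (2-xb)*Q := by
    rcases mul_eq_zero.1 e2 with h | h
    · exact absurd (sub_eq_zero.1 h) hac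
    · linarith [sub_eq_zero.1 h]
  have f3 : xa*P = (2-xa)*Q := by
    rcases mul_eq_zero.1 e3 with h | h
    · exact absurd (sub_eq_zero.1 h) hbc
    · linarith [sub_eq_zero.1 h]
  have g : (xa - xb) * (P + Q) = 0 := by linear_combination f3 - f2
  rcases mul_eq_zero.1 g with h | h
  · exact absurd (sub_eq_zero.1 h) hab
  have hP0 : P = 0 := by linarith
  have hQ0 : Q = 0 := by linarith
  rw [hP0, hQ0] at h1
  simp at h1
  linarith

/-- Lemma: if nonnegative reals `x₁,…,x_{n-1}, y₁,…,y_{n-1}` satisfy `xᵢ + yᵢ = 2` and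
`x_I + y_I = 2b` for all `I` of cardinality `k ∈ {2,…,n-2}`, then each of the families
`x` and `y` takes at most two distinct values. -/
theorem stmt2 (n k : ℕ) (hn : 4 ≤ n) (hk2 : 2 ≤ k) (hkn : k ≤ n - 2)
    (b : ℝ) (hb : 0 < b)
    (x y : Fin (n - 1) → ℝ)
    (hx : ∀ i, 0 ≤ x i) (hy : ∀ i, 0 ≤ y i)
    (hsum : ∀ i, x i + y i = 2)
    (hprod : ∀ I : Finset (Fin (n - 1)), I.card = k →
      (∏ i ∈ I, x i) + (∏ i ∈ I, y i) = 2 * b) :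
    (Finset.univ.image x).card ≤ 2 ∧ (Finset.univ.image y).card ≤ 2 := by
  have hyx : ∀ i, y i = 2 - x i := fun i => by linarith [hsum i]
  suffices hX : (Finset.univ.image x).card ≤ 2 by
    refine ⟨hX, ?_⟩
    have himg : Finset.univ.image y = (Finset.univ.image x).image (fun t => 2 - t) := by
      rw [Finset.image_image]
      exact Finset.image_congr fun i _ => hyx i
    rw [himg]
    exact le_trans Finset.card_image_le hX
  by_contra hc
  push_neg at hc
  obtain ⟨u, v, w, hu, hv, hw, huv, huw, hvw⟩ := Finset.two_lt_card_iff.mp hc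
  obtain ⟨a, -, ha⟩ := Finset.mem_image.1 hu
  obtain ⟨a2, -, ha2⟩ := Finset.mem_image.1 hv
  obtain ⟨a3, -, ha3⟩ := Finset.mem_image.1 hw
  have hab : x a ≠ x a2 := by rw [ha, ha2]; exact huv
  have hac : x a ≠ x a3 := by rw [ha, ha3]; exact huw
  have hbc : x a2 ≠ x a3 := by rw [ha2, ha3]; exact hvw
  have hiab : a ≠ a2 := fun h => hab (by rw [h])
  have hiac : a ≠ a3 := fun h => hac (by rw [h])
  have hibc : a2 ≠ a3 := fun h => hbc (by rw [h])
  -- choose T of size k-2 avoiding a, a2, a3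
  have hcard3 : ({a, a2, a3} : Finset (Fin (n-1))).card = 3 := by
    rw [Finset.card_insert_of_notMem (by simp [hiab, hiac]),
        Finset.card_insert_of_notMem (by simp [hibc])]
    simp
  have hcardS : ((Finset.univ : Finset (Fin (n-1))) \ {a, a2, a3}).card = (n-1) - 3 := by
    rw [Finset.card_sdiff_of_subset (Finset.subset_univ _), hcard3, Finset.card_univ, Fintype.card_fin]
  obtain ⟨T, hTsub, hTcard⟩ :=
    Finset.exists_subset_card_eq (s := (Finset.univ : Finset (Fin (n-1))) \ {a, a2, a3}) (n := k-2)
      (by rw [hcardS]; omega)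
  have hnotT : ∀ p : Fin (n-1), p ∈ ({a, a2, a3} : Finset (Fin (n-1))) → p ∉ T := by
    intro p hp hpT
    have := hTsub hpT
    rw [Finset.mem_sdiff] at this
    exact this.2 hp
  have haT : a ∉ T := hnotT a (by simp)
  have ha2T : a2 ∉ T := hnotT a2 (by simp)
  have ha3T : a3 ∉ T := hnotT a3 (by simp)
  have key : ∀ p q : Fin (n-1), p ∉ T → q ∉ T → p ≠ q →
      x p * x q * (∏ t ∈ T, x t) + (2 - x p) * (2 - x q) * (∏ t ∈ T, (2 - x t)) = 2*b := by
    intro p q hp hq hpq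
    have hpin : p ∉ insert q T := by simp [hpq, hp]
    have hcardI : (insert p (insert q T)).card = k := by
      rw [Finset.card_insert_of_notMem hpin, Finset.card_insert_of_notMem hq]
      omega
    have hI := hprod _ hcardI
    rw [Finset.prod_insert hpin, Finset.prod_insert hq,
        Finset.prod_insert hpin, Finset.prod_insert hq] at hI
    have hyprod : (∏ t ∈ T, y t) = ∏ t ∈ T, (2 - x t) :=
      Finset.prod_congr rfl fun t _ => hyx t
    rw [hyx p, hyx q, hyprod] at hI
    linear_combination hI
  have hPnn : 0 ≤ ∏ t ∈ T, x t := Finset.prod_nonneg fun t _ => hx t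
  have hQnn : 0 ≤ ∏ t ∈ T, (2 - x t) := Finset.prod_nonneg fun t _ => by
    have := hy t; have := hyx t; linarith
  exact alg_aux (x a) (x a2) (x a3) _ _ b hPnn hQnn hb hab hac hbc
    (key a a2 haT ha2T hiab) (key a a3 haT ha3T hiac) (key a2 a3 ha2T ha3T hibc)
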